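/- Let ε ∈ {1, −1}, let φ₀ ≠ 0 be a real constant, set ω = √(1 + φ₀²), and let c₁, c₂ be real constants. Define m₁(θ) = c₁·sin(ω·θ) − c₂·cos(ω·θ), m₂(θ) = ε·m₁'(θ), and m₃(θ) = ε·(m₁(θ) + m₁''(θ))/φ₀. Then (m₁, m₂, m₃) satisfies the asymptotic Darboux system m₁' = ε·m₂, m₂' = φ₀·m₃ − ε·m₁, m₃' = −φ₀·m₂ on ℝ (i.e., the system with f ≡ 0), and the function m₁² + m₂² + m₃² is constant on ℝ. -/

import Mathlib

lemma aux_hasDerivAt (c₁ c₂ ω θ : ℝ) :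
    HasDerivAt (fun θ => c₁ * Real.sin (ω * θ) - c₂ * Real.cos (ω * θ))
      (c₁ * (Real.cos (ω * θ) * ω) - c₂ * (-Real.sin (ω * θ) * ω)) θ := by
  have h : HasDerivAt (fun θ : ℝ => ω * θ) ω θ := by
    simpa using (hasDerivAt_id θ).const_mul ω
  exact (((Real.hasDerivAt_sin (ω * θ)).comp θ h).const_mul c₁).sub
    (((Real.hasDerivAt_cos (ω * θ)).comp θ h).const_mul c₂)

lemma aux_hasDerivAt' (c₁ c₂ ω θ : ℝ) :
    HasDerivAt (fun θ => c₁ * (Real.cos (ω * θ) * ω) - c₂ * (-Real.sin (ω * θ) * ω))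
      (-(ω ^ 2) * (c₁ * Real.sin (ω * θ) - c₂ * Real.cos (ω * θ))) θ := by
  have h : HasDerivAt (fun θ : ℝ => ω * θ) ω θ := by
    simpa using (hasDerivAt_id θ).const_mul ω
  have := ((((Real.hasDerivAt_cos (ω * θ)).comp θ h).mul_const ω).const_mul c₁).sub
    (((((Real.hasDerivAt_sin (ω * θ)).comp θ h).neg).mul_const ω).const_mul c₂)
  refine this.congr_deriv ?_
  ring

/-- Theorem 2 (i) of the paper: the displayed coefficients solve the asymptotic
Darboux system with `f ≡ 0` and give constant breadth. -/
theorem asymptotic_case_i_solution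
    (ε : ℝ) (hε : ε = 1 ∨ ε = -1)
    (φ₀ : ℝ) (hφ₀ : φ₀ ≠ 0) (c₁ c₂ : ℝ) (ω : ℝ)
    (hω : ω = Real.sqrt (1 + φ₀ ^ 2))
    (m₁ m₂ m₃ : ℝ → ℝ)
    (hm₁ : ∀ θ, m₁ θ = c₁ * Real.sin (ω * θ) - c₂ * Real.cos (ω * θ))
    (hm₂ : ∀ θ, m₂ θ = ε * deriv m₁ θ)
    (hm₃ : ∀ θ, m₃ θ = ε * (m₁ θ + deriv (deriv m₁) θ) / φ₀) :
    (∀ θ, deriv m₁ θ = ε * m₂ θ) ∧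
    (∀ θ, deriv m₂ θ = φ₀ * m₃ θ - ε * m₁ θ) ∧
    (∀ θ, deriv m₃ θ = -φ₀ * m₂ θ) ∧
    (∃ C : ℝ, ∀ θ, (m₁ θ) ^ 2 + (m₂ θ) ^ 2 + (m₃ θ) ^ 2 = C) := by
  have hε2 : ε ^ 2 = 1 := by rcases hε with h | h <;> simp [h]
  have hω2 : ω ^ 2 = 1 + φ₀ ^ 2 := by
    rw [hω, Real.sq_sqrt]; positivity
  have hm₁f : m₁ = fun θ => c₁ * Real.sin (ω * θ) - c₂ * Real.cos (ω * θ) :=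
    funext hm₁
  have hd1 : ∀ θ, deriv m₁ θ = c₁ * (Real.cos (ω * θ) * ω) - c₂ * (-Real.sin (ω * θ) * ω) := by
    intro θ; rw [hm₁f]; exact (aux_hasDerivAt c₁ c₂ ω θ).deriv
  have hd1f : deriv m₁ = fun θ => c₁ * (Real.cos (ω * θ) * ω) - c₂ * (-Real.sin (ω * θ) * ω) :=
    funext hd1
  have hd2 : ∀ θ, deriv (deriv m₁) θ = -(ω ^ 2) * m₁ θ := by
    intro θ; rw [hd1f, hm₁ θ]; exact (aux_hasDerivAt' c₁ c₂ ω θ).deriv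
  have hm₃' : ∀ θ, m₃ θ = -ε * φ₀ * m₁ θ := by
    intro θ
    rw [hm₃ θ, hd2 θ, hω2]
    field_simp
    ring
  refine ⟨fun θ => ?_, fun θ => ?_, fun θ => ?_, ?_⟩
  · rw [hm₂ θ]; rcases hε with h | h <;> simp [h]
  · have hm₂f : m₂ = fun θ => ε * deriv m₁ θ := funext hm₂
    have : deriv m₂ θ = ε * deriv (deriv m₁) θ := by
      rw [hm₂f, deriv_const_mul]
      rw [hd1f]
      exact (aux_hasDerivAt' c₁ c₂ ω θ).differentiableAt
    rw [this, hd2 θ, hm₃' θ, hω2]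
    ring
  · have hm₃f : m₃ = fun θ => -ε * φ₀ * m₁ θ := funext hm₃'
    have hdm₁ : DifferentiableAt ℝ m₁ θ := by
      rw [hm₁f]; exact (aux_hasDerivAt c₁ c₂ ω θ).differentiableAt
    rw [hm₃f, deriv_const_mul _ hdm₁, hm₂ θ]
    ring
  · refine ⟨(1 + φ₀ ^ 2) * (c₁ ^ 2 + c₂ ^ 2), fun θ => ?_⟩
    have hpy : Real.sin (ω * θ) ^ 2 + Real.cos (ω * θ) ^ 2 = 1 := Real.sin_sq_add_cos_sq _
    rw [hm₂ θ, hm₃' θ, hd1 θ, hm₁ θ]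
    linear_combination
      ((c₁ * (Real.cos (ω * θ) * ω) - c₂ * (-Real.sin (ω * θ) * ω)) ^ 2 +
        φ₀ ^ 2 * (c₁ * Real.sin (ω * θ) - c₂ * Real.cos (ω * θ)) ^ 2) * hε2 +
      (c₁ * Real.cos (ω * θ) + c₂ * Real.sin (ω * θ)) ^ 2 * hω2 +
      (1 + φ₀ ^ 2) * (c₁ ^ 2 + c₂ ^ 2) * hpy
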